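/- arXiv:2102.12586 — 4 statements merged into one kernel-verified Lean document; each statement's English description precedes it below -/
import Mathlib

section
/- (Variational/min-max characterization of ERMI) Let p be a joint pmf on [m]×[k] with strictly positive marginals. Define for a matrix W ∈ ℝ^{k×m} the function Ψ(W) = −Tr(W P_ŷ Wᵀ) + 2 Tr(W P_{ŷ,s} P_s^{−1/2}) − 1, where P_ŷ = diag(p_Ŷ(1),…,p_Ŷ(m)), P_s = diag(p_S(1),…,p_S(k)), and (P_{ŷ,s})_{j,r} = p(j,r). Then sup over all W ∈ ℝ^{k×m} of Ψ(W) is attained and equals D_R(Ŷ;S) = ∑_{j,r} p(j,r)²/(p_Ŷ(j) p_S(r)) − 1. -/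
open Finset Real Matrix

lemma trace1 (m k : ℕ) (d : Fin m → ℝ) (W : Matrix (Fin k) (Fin m) ℝ) :
    (W * Matrix.diagonal d * Wᵀ).trace = ∑ r, ∑ j, d j * W r j ^ 2 := by
  simp [Matrix.trace, Matrix.diag, Matrix.mul_apply, Matrix.diagonal_apply,
    Finset.sum_mul, ite_mul, pow_two]
  congr 1; ext r; congr 1; ext j; ring

lemma trace2 (m k : ℕ) (p : Fin m × Fin k → ℝ) (d : Fin k → ℝ)
    (W : Matrix (Fin k) (Fin m) ℝ) :
    (W * (Matrix.of fun j r => p (j, r)) * Matrix.diagonal d).trace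
      = ∑ r, ∑ j, W r j * p (j, r) * d r := by
  simp [Matrix.trace, Matrix.diag, Matrix.mul_apply, Matrix.diagonal_apply,
    Finset.sum_mul]

lemma quad_le (a s c x : ℝ) (ha : 0 < a) (hs : 0 < s) :
    -(a * x ^ 2) + 2 * (x * c * s⁻¹) ≤ c ^ 2 / (a * s ^ 2) := by
  have key : c ^ 2 / (a * s ^ 2) - (-(a * x ^ 2) + 2 * (x * c * s⁻¹))
      = a * (x - c / (a * s)) ^ 2 := by
    field_simp
    ring
  nlinarith [mul_nonneg ha.le (sq_nonneg (x - c / (a * s)))]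

/-- variational (min-max) characterization of ERMI:
the supremum over `W` of `Ψ(W)` is attained and equals `D_R(Ŷ;S)`. -/
theorem ermi_variational (m k : ℕ) (hm : 0 < m) (hk : 0 < k)
    (p : Fin m × Fin k → ℝ)
    (hpos : ∀ x, 0 ≤ p x)
    (hsum : ∑ x, p x = 1)
    (hY : ∀ j : Fin m, 0 < ∑ r, p (j, r))
    (hS : ∀ r : Fin k, 0 < ∑ j, p (j, r)) :
    IsGreatest
      {v : ℝ | ∃ W : Matrix (Fin k) (Fin m) ℝ,
        v = -(W * Matrix.diagonal (fun j => ∑ r, p (j, r)) * Wᵀ).trace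
            + 2 * (W * (Matrix.of fun j r => p (j, r))
                * Matrix.diagonal (fun r => (Real.sqrt (∑ j, p (j, r)))⁻¹)).trace
            - 1}
      ((∑ j, ∑ r, (p (j, r)) ^ 2 / ((∑ r', p (j, r')) * (∑ j', p (j', r)))) - 1) := by
  set pY : Fin m → ℝ := fun j => ∑ r, p (j, r) with hpY
  set pS : Fin k → ℝ := fun r => ∑ j, p (j, r) with hpS
  have hsq : ∀ r, Real.sqrt (pS r) ^ 2 = pS r := fun r => Real.sq_sqrt (hS r).le
  have hsqpos : ∀ r, 0 < Real.sqrt (pS r) := fun r => Real.sqrt_pos.mpr (hS r)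
  constructor
  · -- membership: take the optimal W
    refine ⟨Matrix.of fun r j => p (j, r) / (pY j * Real.sqrt (pS r)), ?_⟩
    rw [trace1, trace2]
    simp only [Matrix.of_apply]
    rw [show (∑ j, ∑ r, (p (j, r)) ^ 2 / (pY j * pS r)) = ∑ r, ∑ j, p (j, r) ^ 2 / (pY j * pS r) from Finset.sum_comm]
    have key : ∀ r, ∀ j : Fin m,
        pY j * (p (j, r) / (pY j * Real.sqrt (pS r))) ^ 2 = p (j, r) ^ 2 / (pY j * pS r)
        ∧ (p (j, r) / (pY j * Real.sqrt (pS r))) * p (j, r) * (Real.sqrt (pS r))⁻¹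
          = p (j, r) ^ 2 / (pY j * pS r) := by
      intro r j
      have h1 := (hY j).ne'
      have h2 := (hsqpos r).ne'
      rw [← hsq r]
      constructor <;> (field_simp; rw [Real.sqrt_sq (hsqpos r).le])
    have hA : (∑ r, ∑ j, pY j * (p (j, r) / (pY j * Real.sqrt (pS r))) ^ 2)
        = ∑ r, ∑ j, p (j, r) ^ 2 / (pY j * pS r) :=
      Finset.sum_congr rfl fun r _ => Finset.sum_congr rfl fun j _ => (key r j).1
    have hB : (∑ r, ∑ j, (p (j, r) / (pY j * Real.sqrt (pS r))) * p (j, r) * (Real.sqrt (pS r))⁻¹)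
        = ∑ r, ∑ j, p (j, r) ^ 2 / (pY j * pS r) :=
      Finset.sum_congr rfl fun r _ => Finset.sum_congr rfl fun j _ => (key r j).2
    rw [hA, hB]
    ring
  · -- upper bound
    rintro v ⟨W, rfl⟩
    rw [trace1, trace2]
    rw [show (∑ j, ∑ r, (p (j, r)) ^ 2 / (pY j * pS r)) = ∑ r, ∑ j, p (j, r) ^ 2 / (pY j * pS r) from Finset.sum_comm]
    have key : ∀ r ∈ Finset.univ, ∀ j ∈ (Finset.univ : Finset (Fin m)),
        -(pY j * W r j ^ 2) + 2 * (W r j * p (j, r) * (Real.sqrt (pS r))⁻¹)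
          ≤ p (j, r) ^ 2 / (pY j * pS r) := by
      intro r _ j _
      have := quad_le (pY j) (Real.sqrt (pS r)) (p (j, r)) (W r j) (hY j) (hsqpos r)
      rwa [hsq r] at this
    have := Finset.sum_le_sum (fun r hr => Finset.sum_le_sum (key r hr))
    simp only [Finset.sum_add_distrib, Finset.sum_neg_distrib, ← Finset.mul_sum] at this
    linarith
end

section
/- (ERMI upper bounds Shannon mutual information) For a joint pmf p on [m]×[k] with strictly positive marginals, the Shannon mutual information I(Ŷ;S) = ∑_{j,r} p(j,r) log( p(j,r) / (p_Ŷ(j) p_S(r)) ) satisfies 0 ≤ I(Ŷ;S) ≤ D_R(Ŷ;S), where D_R(Ŷ;S) = ∑_{j,r} p(j,r)²/(p_Ŷ(j) p_S(r)) − 1. -/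
open Finset Real

lemma mi_term_lb (a q : ℝ) (ha : 0 ≤ a) (hq : 0 < q) :
    a - q ≤ a * Real.log (a / q) := by
  rcases eq_or_lt_of_le ha with h | h
  · simp [← h]; linarith
  · have hlog : Real.log (q / a) ≤ q / a - 1 :=
      Real.log_le_sub_one_of_pos (by positivity)
    have : Real.log (a / q) = - Real.log (q / a) := by
      rw [← Real.log_inv, inv_div]
    rw [this]
    have h2 : a * (1 - q / a) ≤ a * (- Real.log (q / a)) := by
      apply mul_le_mul_of_nonneg_left _ ha
      linarith
    have : a * (1 - q / a) = a - q := by field_simp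
    linarith
    
lemma mi_term_ub (a q : ℝ) (ha : 0 ≤ a) (hq : 0 < q) :
    a * Real.log (a / q) ≤ a ^ 2 / q - a := by
  rcases eq_or_lt_of_le ha with h | h
  · simp [← h]
  · have hlog : Real.log (a / q) ≤ a / q - 1 :=
      Real.log_le_sub_one_of_pos (by positivity)
    have h2 : a * Real.log (a / q) ≤ a * (a / q - 1) :=
      mul_le_mul_of_nonneg_left hlog ha
    have : a * (a / q - 1) = a ^ 2 / q - a := by field_simp
    linarith

/-- ERMI upper bounds Shannon mutual information:
`0 ≤ I(Ŷ;S) ≤ D_R(Ŷ;S)`. -/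
theorem shannon_mi_le_ermi (m k : ℕ) (hm : 0 < m) (hk : 0 < k)
    (p : Fin m × Fin k → ℝ)
    (hpos : ∀ x, 0 ≤ p x)
    (hsum : ∑ x, p x = 1)
    (hY : ∀ j : Fin m, 0 < ∑ r, p (j, r))
    (hS : ∀ r : Fin k, 0 < ∑ j, p (j, r)) :
    0 ≤ ∑ j, ∑ r, p (j, r)
          * Real.log (p (j, r) / ((∑ r', p (j, r')) * (∑ j', p (j', r))))
    ∧ ∑ j, ∑ r, p (j, r)
          * Real.log (p (j, r) / ((∑ r', p (j, r')) * (∑ j', p (j', r))))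
        ≤ (∑ j, ∑ r, (p (j, r)) ^ 2
              / ((∑ r', p (j, r')) * (∑ j', p (j', r)))) - 1 := by
  have hq : ∀ j r, 0 < (∑ r', p (j, r')) * (∑ j', p (j', r)) :=
    fun j r => mul_pos (hY j) (hS r)
  have hsum' : ∑ j, ∑ r, p (j, r) = 1 := by
    rw [← hsum, Fintype.sum_prod_type]
  have hqsum : ∑ j, ∑ r, (∑ r', p (j, r')) * (∑ j', p (j', r)) = 1 := by
    have : ∀ j : Fin m, ∑ r, (∑ r', p (j, r')) * (∑ j', p (j', r))
        = (∑ r', p (j, r')) * ∑ r, ∑ j', p (j', r) := by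
      intro j; rw [Finset.mul_sum]
    rw [Finset.sum_congr rfl fun j _ => this j, ← Finset.sum_mul]
    have h1 : ∑ r : Fin k, ∑ j' : Fin m, p (j', r) = 1 := by
      rw [Finset.sum_comm]; exact hsum'
    rw [h1, mul_one]
    exact hsum'
  constructor
  · have hle : ∑ j, ∑ r, (p (j, r) - (∑ r', p (j, r')) * (∑ j', p (j', r)))
        ≤ ∑ j, ∑ r, p (j, r)
          * Real.log (p (j, r) / ((∑ r', p (j, r')) * (∑ j', p (j', r)))) := by
      apply Finset.sum_le_sum; intro j _
      apply Finset.sum_le_sum; intro r _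
      exact mi_term_lb _ _ (hpos _) (hq j r)
    have : ∑ j, ∑ r, (p (j, r) - (∑ r', p (j, r')) * (∑ j', p (j', r))) = 0 := by
      simp only [Finset.sum_sub_distrib, hsum', hqsum]; ring
    linarith
  · have hle : ∑ j, ∑ r, p (j, r)
          * Real.log (p (j, r) / ((∑ r', p (j, r')) * (∑ j', p (j', r))))
        ≤ ∑ j, ∑ r, ((p (j, r)) ^ 2 / ((∑ r', p (j, r')) * (∑ j', p (j', r))) - p (j, r)) := by
      apply Finset.sum_le_sum; intro j _
      apply Finset.sum_le_sum; intro r _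
      exact mi_term_ub _ _ (hpos _) (hq j r)
    have : ∑ j, ∑ r, ((p (j, r)) ^ 2 / ((∑ r', p (j, r')) * (∑ j', p (j', r))) - p (j, r))
        = (∑ j, ∑ r, (p (j, r)) ^ 2 / ((∑ r', p (j, r')) * (∑ j', p (j', r)))) - 1 := by
      simp only [Finset.sum_sub_distrib, hsum']
    linarith
end

section
/- (L_∞ bounded by L_1, hence by √ERMI) For a joint pmf p on [m]×[k] with strictly positive marginals, the L_∞ demographic parity violation max_{j,r} |p(j,r) − p_Ŷ(j) p_S(r)| is at most √(D_R(Ŷ;S)). -/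
open Finset Real

/-- the L∞ demographic parity violation is at most `√D_R`. -/
theorem linf_violation_le_sqrt_ermi (m k : ℕ) (hm : 0 < m) (hk : 0 < k)
    (p : Fin m × Fin k → ℝ)
    (hpos : ∀ x, 0 ≤ p x)
    (hsum : ∑ x, p x = 1)
    (hY : ∀ j : Fin m, 0 < ∑ r, p (j, r))
    (hS : ∀ r : Fin k, 0 < ∑ j, p (j, r)) :
    ∀ (j : Fin m) (r : Fin k),
      |p (j, r) - (∑ r', p (j, r')) * (∑ j', p (j', r))|
        ≤ Real.sqrt ((∑ j, ∑ r,
            (p (j, r)) ^ 2 / ((∑ r', p (j, r')) * (∑ j', p (j', r)))) - 1) := by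
  intro j r
  set q : Fin m → Fin k → ℝ := fun j r => (∑ r', p (j, r')) * (∑ j', p (j', r)) with hqdef
  have hqpos : ∀ j r, 0 < q j r := fun j r => mul_pos (hY j) (hS r)
  have hPY1 : ∑ j, ∑ r, p (j, r) = 1 := by
    rw [← hsum, ← Fintype.sum_prod_type]
  have hPS1 : ∑ r, ∑ j, p (j, r) = 1 := by
    rw [Finset.sum_comm]; exact hPY1
  have hqsum : ∑ j, ∑ r, q j r = 1 := by
    simp only [hqdef]
    rw [← Finset.sum_mul_sum]
    rw [hPY1, hPS1, one_mul]
  have hqle1 : ∀ j r, q j r ≤ 1 := by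
    intro j r
    have h1 : (∑ r', p (j, r')) ≤ 1 := by
      rw [← hPY1]
      exact Finset.single_le_sum (f := fun j => ∑ r, p (j, r))
        (fun i _ => Finset.sum_nonneg fun _ _ => hpos _) (Finset.mem_univ j)
    have h2 : (∑ j', p (j', r)) ≤ 1 := by
      rw [← hPS1]
      exact Finset.single_le_sum (f := fun r => ∑ j, p (j, r))
        (fun i _ => Finset.sum_nonneg fun _ _ => hpos _) (Finset.mem_univ r)
    exact mul_le_one₀ h1 (le_of_lt (hS r)) h2
  have key : ∑ j, ∑ r, (p (j, r) - q j r) ^ 2 / q j r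
      = (∑ j, ∑ r, (p (j, r)) ^ 2 / q j r) - 1 := by
    have expand : ∀ j r, (p (j, r) - q j r) ^ 2 / q j r
        = (p (j, r)) ^ 2 / q j r - 2 * p (j, r) + q j r := by
      intro j r
      have hne : q j r ≠ 0 := ne_of_gt (hqpos j r)
      field_simp
      ring
    calc ∑ j, ∑ r, (p (j, r) - q j r) ^ 2 / q j r
        = ∑ j, ∑ r, ((p (j, r)) ^ 2 / q j r - 2 * p (j, r) + q j r) := by
          exact Finset.sum_congr rfl fun j _ => Finset.sum_congr rfl fun r _ => expand j r
      _ = (∑ j, ∑ r, (p (j, r)) ^ 2 / q j r) - 2 * (∑ j, ∑ r, p (j, r))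
            + ∑ j, ∑ r, q j r := by
          simp [Finset.sum_add_distrib, Finset.sum_sub_distrib, Finset.mul_sum]
      _ = (∑ j, ∑ r, (p (j, r)) ^ 2 / q j r) - 1 := by
          rw [hPY1, hqsum]; ring
  have hterm : (p (j, r) - q j r) ^ 2 ≤ (∑ j, ∑ r, (p (j, r)) ^ 2 / q j r) - 1 := by
    rw [← key]
    have h1 : (p (j, r) - q j r) ^ 2 ≤ (p (j, r) - q j r) ^ 2 / q j r := by
      rw [le_div_iff₀ (hqpos j r)]
      nlinarith [sq_nonneg (p (j, r) - q j r), hqle1 j r, hqpos j r]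
    refine h1.trans ?_
    have h2 : (p (j, r) - q j r) ^ 2 / q j r ≤ ∑ r', (p (j, r') - q j r') ^ 2 / q j r' :=
      Finset.single_le_sum (f := fun r' => (p (j, r') - q j r') ^ 2 / q j r')
        (fun i _ => div_nonneg (sq_nonneg _) (le_of_lt (hqpos j i))) (Finset.mem_univ r)
    refine h2.trans ?_
    exact Finset.single_le_sum (f := fun j' => ∑ r', (p (j', r') - q j' r') ^ 2 / q j' r')
      (fun i _ => Finset.sum_nonneg fun i' _ =>
        div_nonneg (sq_nonneg _) (le_of_lt (hqpos i i'))) (Finset.mem_univ j)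
  exact Real.abs_le_sqrt hterm
end

section
/- (Conditional demographic parity L_∞ violation bound) Let p be a joint pmf on [m]×[k] with strictly positive marginals, and let p_min = min_r p_S(r). Define dp := max_{j,r} | p(j,r)/p_S(r) − p_Ŷ(j) | (the maximal deviation of the conditional distribution of Ŷ given S = r from the marginal of Ŷ). Then 0 ≤ dp ≤ (1/p_min) √(D_R(Ŷ;S)). -/
open Finset Real

/-- conditional demographic parity L∞ violation bound:
`0 ≤ dp ≤ (1/p_min) √D_R` where `p_min = min_r p_S(r)`. -/
theorem conditional_dp_violation_le (m k : ℕ) (hm : 0 < m) (hk : 0 < k)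
    (p : Fin m × Fin k → ℝ)
    (hpos : ∀ x, 0 ≤ p x)
    (hsum : ∑ x, p x = 1)
    (hY : ∀ j : Fin m, 0 < ∑ r, p (j, r))
    (hS : ∀ r : Fin k, 0 < ∑ j, p (j, r)) :
    ∀ (j : Fin m) (r : Fin k),
      0 ≤ |p (j, r) / (∑ j', p (j', r)) - (∑ r', p (j, r'))|
      ∧ |p (j, r) / (∑ j', p (j', r)) - (∑ r', p (j, r'))|
        ≤ (1 / (Finset.univ.inf'
              (Finset.univ_nonempty_iff.mpr (Fin.pos_iff_nonempty.mp hk))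
              (fun r' : Fin k => ∑ j', p (j', r'))))
          * Real.sqrt ((∑ j', ∑ r',
              (p (j', r')) ^ 2 / ((∑ r'', p (j', r'')) * (∑ j'', p (j'', r')))) - 1) := by
  intro j r
  set q : Fin m → ℝ := fun j' => ∑ r', p (j', r') with hq_def
  set s : Fin k → ℝ := fun r' => ∑ j', p (j', r') with hs_def
  have hq : ∀ j', 0 < q j' := hY
  have hs : ∀ r', 0 < s r' := hS
  have hsum' : ∑ j', ∑ r', p (j', r') = 1 := by
    rw [← Fintype.sum_prod_type]; exact hsum
  have hsumq : ∑ j', q j' = 1 := hsum'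
  have hsums : ∑ r', s r' = 1 := by
    rw [hs_def]; rw [Finset.sum_comm]; exact hsum'
  set D : ℝ := (∑ j', ∑ r', (p (j', r')) ^ 2 / (q j' * s r')) - 1 with hD_def
  -- key identity
  have hDeq : D = ∑ j', ∑ r', (p (j', r') - q j' * s r') ^ 2 / (q j' * s r') := by
    have hterm : ∀ (j' : Fin m) (r' : Fin k),
        (p (j', r') - q j' * s r') ^ 2 / (q j' * s r')
        = (p (j', r')) ^ 2 / (q j' * s r') - 2 * p (j', r') + q j' * s r' := by
      intro j' r'
      have hqz : q j' ≠ 0 := (hq j').ne'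
      have hsz : s r' ≠ 0 := (hs r').ne'
      field_simp
      ring
    simp_rw [hterm, Finset.sum_add_distrib, Finset.sum_sub_distrib, ← Finset.mul_sum,
      ← Finset.sum_mul]
    rw [hD_def, hsum', hsums]
    ring
  have hDnn : 0 ≤ D := by
    rw [hDeq]
    apply Finset.sum_nonneg; intro j' _
    apply Finset.sum_nonneg; intro r' _
    exact div_nonneg (sq_nonneg _) (le_of_lt (mul_pos (hq j') (hs r')))
  -- single term bound
  have hterm_le : (p (j, r) - q j * s r) ^ 2 / (q j * s r) ≤ D := by
    rw [hDeq]
    calc (p (j, r) - q j * s r) ^ 2 / (q j * s r)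
        ≤ ∑ r', (p (j, r') - q j * s r') ^ 2 / (q j * s r') := by
          apply Finset.single_le_sum (f := fun r' => (p (j, r') - q j * s r') ^ 2 / (q j * s r'))
            (fun r' _ => div_nonneg (sq_nonneg _) (le_of_lt (mul_pos (hq j) (hs r'))))
            (Finset.mem_univ r)
      _ ≤ ∑ j', ∑ r', (p (j', r') - q j' * s r') ^ 2 / (q j' * s r') := by
          apply Finset.single_le_sum
            (f := fun j' => ∑ r', (p (j', r') - q j' * s r') ^ 2 / (q j' * s r'))
            (fun j' _ => Finset.sum_nonneg fun r' _ =>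
              div_nonneg (sq_nonneg _) (le_of_lt (mul_pos (hq j') (hs r'))))
            (Finset.mem_univ j)
  have hq1 : q j ≤ 1 := by
    rw [← hsumq]
    exact Finset.single_le_sum (fun j' _ => (hq j').le) (Finset.mem_univ j)
  have hs1 : s r ≤ 1 := by
    rw [← hsums]
    exact Finset.single_le_sum (fun r' _ => (hs r').le) (Finset.mem_univ r)
  have hsq_le : (p (j, r) - q j * s r) ^ 2 ≤ D := by
    have h1 := (div_le_iff₀ (mul_pos (hq j) (hs r))).mp hterm_le
    have hqs1 : q j * s r ≤ 1 := by nlinarith [(hq j).le, (hs r).le]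
    calc (p (j, r) - q j * s r) ^ 2 ≤ D * (q j * s r) := h1
      _ ≤ D * 1 := mul_le_mul_of_nonneg_left hqs1 hDnn
      _ = D := mul_one D
  have habs : |p (j, r) - q j * s r| ≤ Real.sqrt D := Real.abs_le_sqrt hsq_le
  set pmin : ℝ := Finset.univ.inf'
      (Finset.univ_nonempty_iff.mpr (Fin.pos_iff_nonempty.mp hk))
      (fun r' : Fin k => ∑ j', p (j', r')) with hpmin_def
  have hpmin_pos : 0 < pmin := by
    rw [hpmin_def]
    exact (Finset.lt_inf'_iff _).mpr fun r' _ => hS r'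
  have hpmin_le : pmin ≤ s r := Finset.inf'_le _ (Finset.mem_univ r)
  refine ⟨abs_nonneg _, ?_⟩
  have hrw : p (j, r) / s r - q j = (p (j, r) - q j * s r) / s r := by
    have hsz : s r ≠ 0 := (hs r).ne'
    field_simp
  show |p (j, r) / s r - q j| ≤ 1 / pmin * Real.sqrt D
  rw [hrw, abs_div, abs_of_pos (hs r), one_div, inv_mul_eq_div]
  exact div_le_div₀ (Real.sqrt_nonneg D) habs hpmin_pos hpmin_le
end
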